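/- Suppose a stalled motor admittance scales as f·(G_stall − jB_stall) with connected fraction f ∈ [0,1], and the load voltage is V_L(f) = V_s / |1 + Z_f·(Y₀ + f(G_stall − jB_stall))| for a fixed source voltage V_s > 0, feeder impedance Z_f = R_f + jX_f with R_f, X_f > 0, and background admittance Y₀ = G₀ − jB₀ with G₀, B₀ ≥ 0. Then V_L is strictly decreasing in f. -/

import Mathlib

open Complex

lemma aux_mono (Rf Xf g1 b1 g2 b2 : ℝ) (hRf : 0 < Rf) (hXf : 0 < Xf)
    (hg1 : 0 ≤ g1) (hb1 : 0 ≤ b1) (hg : g1 < g2) (hb : b1 < b2) :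
    (1 + (Rf * g1 + Xf * b1))^2 + (Xf * g1 - Rf * b1)^2 <
    (1 + (Rf * g2 + Xf * b2))^2 + (Xf * g2 - Rf * b2)^2 := by
  have e : ∀ g b' : ℝ, (1 + (Rf * g + Xf * b'))^2 + (Xf * g - Rf * b')^2 =
      1 + 2*(Rf*g + Xf*b') + (Rf^2 + Xf^2)*(g^2 + b'^2) := by intro g b'; ring
  rw [e, e]
  have h1 : g1^2 ≤ g2^2 := by nlinarith
  have h2 : b1^2 ≤ b2^2 := by nlinarith
  nlinarith [mul_pos hRf (sub_pos.2 hg), mul_pos hXf (sub_pos.2 hb),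
    mul_nonneg (by positivity : (0:ℝ) ≤ Rf^2 + Xf^2)
      (by linarith : (0:ℝ) ≤ g2^2 - g1^2 + (b2^2 - b1^2))]

lemma aux_pos (Rf Xf g1 b1 : ℝ) (hRf : 0 < Rf) (hXf : 0 < Xf)
    (hg1 : 0 ≤ g1) (hb1 : 0 ≤ b1) :
    0 < (1 + (Rf * g1 + Xf * b1))^2 + (Xf * g1 - Rf * b1)^2 := by
  have h3 : 0 ≤ Rf * g1 + Xf * b1 := by positivity
  nlinarith [sq_nonneg (Xf * g1 - Rf * b1)]

/-- With V_L(f) = V_s / |1 + Z_f (Y₀ + f (G_stall − jB_stall))|, V_s > 0,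
Z_f = R_f + jX_f with R_f, X_f > 0, background admittance Y₀ = G₀ − jB₀ with
G₀, B₀ ≥ 0 and G_stall, B_stall > 0, the load voltage V_L is strictly decreasing
in the connected fraction f on [0,1]. -/
theorem load_voltage_decreasing_in_fraction (Vs Rf Xf G0 B0 Gst Bst : ℝ)
    (hVs : 0 < Vs) (hRf : 0 < Rf) (hXf : 0 < Xf) (hG0 : 0 ≤ G0) (hB0 : 0 ≤ B0)
    (hGst : 0 < Gst) (hBst : 0 < Bst) :
    let VL : ℝ → ℝ := fun f =>
      Vs / ‖1 + (Rf + Xf * I) *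
        ((G0 - B0 * I) + (f : ℂ) * (Gst - Bst * I))‖
    StrictAntiOn VL (Set.Icc (0 : ℝ) 1) := by
  intro VL
  intro a ha b hb hab
  have ha0 : 0 ≤ a := ha.1
  have habs : ∀ f : ℝ, (‖1 + (Rf + Xf * I) *
      ((G0 - B0 * I) + (f : ℂ) * (Gst - Bst * I))‖)^2 =
      (1 + (Rf * (G0 + f * Gst) + Xf * (B0 + f * Bst)))^2 +
      (Xf * (G0 + f * Gst) - Rf * (B0 + f * Bst))^2 := by
    intro f
    rw [Complex.sq_norm]
    simp [Complex.normSq_apply]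
    ring
  have hg : G0 + a * Gst < G0 + b * Gst := by nlinarith
  have hb' : B0 + a * Bst < B0 + b * Bst := by nlinarith
  have hga0 : 0 ≤ G0 + a * Gst := by positivity
  have hba0 : 0 ≤ B0 + a * Bst := by positivity
  have hsq : (‖1 + (Rf + Xf * I) *
      ((G0 - B0 * I) + (a : ℂ) * (Gst - Bst * I))‖)^2 <
      (‖1 + (Rf + Xf * I) *
      ((G0 - B0 * I) + (b : ℂ) * (Gst - Bst * I))‖)^2 := by
    rw [habs, habs]
    exact aux_mono Rf Xf _ _ _ _ hRf hXf hga0 hba0 hg hb'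
  have hpos : 0 < ‖1 + (Rf + Xf * I) *
      ((G0 - B0 * I) + (a : ℂ) * (Gst - Bst * I))‖ := by
    have h2 : 0 < (‖1 + (Rf + Xf * I) *
        ((G0 - B0 * I) + (a : ℂ) * (Gst - Bst * I))‖)^2 := by
      rw [habs]
      exact aux_pos Rf Xf _ _ hRf hXf hga0 hba0
    nlinarith [norm_nonneg (1 + (Rf + Xf * I) * ((G0 - B0 * I) + (a : ℂ) * (Gst - Bst * I)))]
  have habs_lt : ‖1 + (Rf + Xf * I) *
      ((G0 - B0 * I) + (a : ℂ) * (Gst - Bst * I))‖ <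
      ‖1 + (Rf + Xf * I) *
      ((G0 - B0 * I) + (b : ℂ) * (Gst - Bst * I))‖ :=
    lt_of_pow_lt_pow_left₀ 2 (norm_nonneg _) hsq
  exact div_lt_div_of_pos_left hVs hpos habs_lt
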